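/- Let p be a periodic point of f of period k and suppose λ₊(p) − λ₋(p) < θ, where λ₊(p) = lim_n (1/(kn)) log‖A^{kn}(p)‖ and λ₋(p) = −lim_n (1/(kn)) log‖A^{kn}(p)^{-1}‖. Then there exists N > 0 (a multiple of k) such that p ∈ D(N,θ): for all s ≥ 1, ∏_{j=0}^{s-1}‖A^{±N}(f^{±jN}(p))‖·‖A^{±N}(f^{±jN}(p))^{-1}‖ ≤ e^{sNθ}. -/

import Mathlib

open Matrix Filter

/-- The Euclidean operator norm of a real `d × d` matrix. -/
noncomputable def opNorm {d : ℕ} (M : Matrix (Fin d) (Fin d) ℝ) : ℝ :=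
  ‖(Matrix.toEuclideanLin M).toContinuousLinearMap‖

/-- Iterates of a linear cocycle for nonnegative times:
`A^0(x) = Id`, `A^(n+1)(x) = A(f^n x) * A^n(x)`. -/
noncomputable def cocN {X : Type*} {d : ℕ} (f : Equiv.Perm X) (A : X → GL (Fin d) ℝ) :
    ℕ → X → GL (Fin d) ℝ
  | 0, _ => 1
  | n + 1, x => A ((f ^ n) x) * cocN f A n x

/-- Iterates of a linear cocycle for all integer times; for `n < 0`,
`A^n(x) = A(f^n x)^{-1} ⋯ A(f^{-1} x)^{-1} = (A^{-n}(f^n x))^{-1}`. -/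
noncomputable def coc {X : Type*} {d : ℕ} (f : Equiv.Perm X) (A : X → GL (Fin d) ℝ)
    (n : ℤ) (x : X) : GL (Fin d) ℝ :=
  if 0 ≤ n then cocN f A n.toNat x
  else (cocN f A (-n).toNat ((f ^ n) x))⁻¹

/-- The set `D(N,θ)` of points whose forward and backward products of quasiconformal
distortions at scale `N` grow at exponential rate at most `θ`. -/
noncomputable def Dset {X : Type*} {d : ℕ} (f : Equiv.Perm X) (A : X → GL (Fin d) ℝ)
    (N : ℕ) (θ : ℝ) : Set X :=
  {x | ∀ s : ℕ, 1 ≤ s →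
    (∏ j ∈ Finset.range s,
        opNorm ((coc f A (N : ℤ) ((f ^ ((j : ℤ) * N)) x) : Matrix (Fin d) (Fin d) ℝ)) *
          opNorm ((((coc f A (N : ℤ) ((f ^ ((j : ℤ) * N)) x))⁻¹ : GL (Fin d) ℝ) :
            Matrix (Fin d) (Fin d) ℝ)))
      ≤ Real.exp (s * N * θ) ∧
    (∏ j ∈ Finset.range s,
        opNorm ((coc f A (-(N : ℤ)) ((f ^ (-((j : ℤ) * N))) x) : Matrix (Fin d) (Fin d) ℝ)) *
          opNorm ((((coc f A (-(N : ℤ)) ((f ^ (-((j : ℤ) * N))) x))⁻¹ : GL (Fin d) ℝ) :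
            Matrix (Fin d) (Fin d) ℝ)))
      ≤ Real.exp (s * N * θ)}

lemma coc_natCast {X : Type*} {d : ℕ} (f : Equiv.Perm X) (A : X → GL (Fin d) ℝ)
    (N : ℕ) (x : X) : coc f A (N : ℤ) x = cocN f A N x := by
  simp [coc]

lemma coc_negNatCast {X : Type*} {d : ℕ} (f : Equiv.Perm X) (A : X → GL (Fin d) ℝ)
    {N : ℕ} (hN : 1 ≤ N) (x : X) :
    coc f A (-(N : ℤ)) x = (cocN f A N ((f ^ (-(N : ℤ))) x))⁻¹ := by
  have h : ¬ (0 ≤ -(N : ℤ)) := by omega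
  simp [coc, h]
  intro h0; exact absurd h0 (by omega)

/-- if `p` is a periodic point of period `k` whose extremal Lyapunov
exponents satisfy `λ₊(p) − λ₋(p) < θ`, then there is a multiple `N` of `k` with
`p ∈ D(N,θ)`. Here `λ₊(p) = lim (1/(kn)) log ‖A^{kn}(p)‖` and
`λ₋(p) = −lim (1/(kn)) log ‖(A^{kn}(p))⁻¹‖`. -/
theorem periodic_mem_Dset {X : Type*} {d : ℕ} (f : Equiv.Perm X) (A : X → GL (Fin d) ℝ)
    (p : X) (k : ℕ) (hk : 1 ≤ k) (hp : (f ^ k) p = p)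
    (θ : ℝ) (hθ : 0 < θ) (lplus lminus : ℝ)
    (hplus : Tendsto
      (fun n : ℕ => Real.log (opNorm ((coc f A ((k * n : ℕ) : ℤ) p : Matrix (Fin d) (Fin d) ℝ)))
        / (k * n : ℝ)) atTop (nhds lplus))
    (hminus : Tendsto
      (fun n : ℕ => -(Real.log (opNorm ((((coc f A ((k * n : ℕ) : ℤ) p)⁻¹ : GL (Fin d) ℝ) :
          Matrix (Fin d) (Fin d) ℝ))) / (k * n : ℝ))) atTop (nhds lminus))
    (hgap : lplus - lminus < θ) :
    ∃ N : ℕ, 1 ≤ N ∧ k ∣ N ∧ p ∈ Dset f A N θ := by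
  
  -- combined limit
  classical
  have hlim : Tendsto (fun n : ℕ =>
      (Real.log (opNorm ((coc f A ((k * n : ℕ) : ℤ) p : Matrix (Fin d) (Fin d) ℝ))) +
        Real.log (opNorm ((((coc f A ((k * n : ℕ) : ℤ) p)⁻¹ : GL (Fin d) ℝ) :
          Matrix (Fin d) (Fin d) ℝ)))) / (k * n : ℝ)) atTop (nhds (lplus - lminus)) := by
    have h := hplus.sub hminus
    convert h using 2 with n
    ring
  have hev : ∀ᶠ n : ℕ in atTop,
      (Real.log (opNorm ((coc f A ((k * n : ℕ) : ℤ) p : Matrix (Fin d) (Fin d) ℝ))) +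
        Real.log (opNorm ((((coc f A ((k * n : ℕ) : ℤ) p)⁻¹ : GL (Fin d) ℝ) :
          Matrix (Fin d) (Fin d) ℝ)))) / (k * n : ℝ) < θ :=
    hlim.eventually_lt_const hgap
  obtain ⟨n, hn1, hn⟩ := ((eventually_ge_atTop 1).and hev).exists
  set N : ℕ := k * n with hNdef
  have hN1 : 1 ≤ N := Nat.one_le_iff_ne_zero.mpr (by positivity)
  have hNposR : (0 : ℝ) < (N : ℝ) := by exact_mod_cast hN1
  -- fixed point facts
  have hfix : ∀ m : ℤ, (f ^ ((k : ℤ) * m)) p = p := by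
    intro m
    have h1 : (f : Equiv.Perm X) ^ ((k : ℤ) * m) = (f ^ k) ^ m := by
      rw [_root_.zpow_mul, zpow_natCast]
    rw [h1]
    exact Function.IsFixedPt.perm_zpow hp m
  set M : GL (Fin d) ℝ := cocN f A N p with hMdef
  have hMeq : coc f A ((k * n : ℕ) : ℤ) p = M := coc_natCast f A N p
  rw [hMeq] at hn
  -- the distortion constant
  set a : ℝ := opNorm ((M : Matrix (Fin d) (Fin d) ℝ)) with hadef
  set b : ℝ := opNorm (((M⁻¹ : GL (Fin d) ℝ) : Matrix (Fin d) (Fin d) ℝ)) with hbdef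
  have ha0 : 0 ≤ a := norm_nonneg _
  have hb0 : 0 ≤ b := norm_nonneg _
  have hNcast : ((k * n : ℕ) : ℝ) = (N : ℝ) := by push_cast [hNdef]; ring
  have hc : a * b ≤ Real.exp ((N : ℝ) * θ) := by
    rcases eq_or_lt_of_le ha0 with ha | ha
    · rw [← ha, zero_mul]; positivity
    rcases eq_or_lt_of_le hb0 with hb | hb
    · rw [← hb, mul_zero]; positivity
    have hkn : (k : ℝ) * (n : ℝ) = (N : ℝ) := by rw [hNdef]; push_cast; ring
    have hknpos : (0 : ℝ) < (k : ℝ) * (n : ℝ) := by rw [hkn]; exact hNposR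
    have hsum : Real.log a + Real.log b < (N : ℝ) * θ := by
      have h2 := (div_lt_iff₀ hknpos).mp hn
      rw [hkn] at h2; linarith
    have hlog : Real.log (a * b) < (N : ℝ) * θ := by
      rw [Real.log_mul (ne_of_gt ha) (ne_of_gt hb)]; exact hsum
    have h3 := Real.exp_lt_exp.mpr hlog
    rw [Real.exp_log (mul_pos ha hb)] at h3
    exact le_of_lt h3
  refine ⟨N, hN1, ⟨n, rfl⟩, ?_⟩
  intro s hs
  have hexp : Real.exp ((N : ℝ) * θ) ^ s = Real.exp ((s : ℝ) * (N : ℝ) * θ) := by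
    rw [← Real.exp_nat_mul]; ring_nf
  constructor
  · -- forward product
    have hterm : ∀ j : ℕ,
        opNorm ((coc f A (N : ℤ) ((f ^ ((j : ℤ) * N)) p) : Matrix (Fin d) (Fin d) ℝ)) *
          opNorm ((((coc f A (N : ℤ) ((f ^ ((j : ℤ) * N)) p))⁻¹ : GL (Fin d) ℝ) :
            Matrix (Fin d) (Fin d) ℝ)) = a * b := by
      intro j
      have hpoint : (f ^ ((j : ℤ) * N)) p = p := by
        have : ((j : ℤ) * N) = (k : ℤ) * ((j : ℤ) * n) := by push_cast [hNdef]; ring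
        rw [this]; exact hfix _
      rw [hpoint, coc_natCast]
    calc (∏ j ∈ Finset.range s,
        opNorm ((coc f A (N : ℤ) ((f ^ ((j : ℤ) * N)) p) : Matrix (Fin d) (Fin d) ℝ)) *
          opNorm ((((coc f A (N : ℤ) ((f ^ ((j : ℤ) * N)) p))⁻¹ : GL (Fin d) ℝ) :
            Matrix (Fin d) (Fin d) ℝ)))
        = (a * b) ^ s := by
          rw [Finset.prod_congr rfl fun j _ => hterm j, Finset.prod_const, Finset.card_range]
      _ ≤ Real.exp ((N : ℝ) * θ) ^ s := pow_le_pow_left₀ (by positivity) hc s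
      _ = Real.exp ((s : ℝ) * (N : ℝ) * θ) := hexp
  · -- backward product
    have hterm : ∀ j : ℕ,
        opNorm ((coc f A (-(N : ℤ)) ((f ^ (-((j : ℤ) * N))) p) : Matrix (Fin d) (Fin d) ℝ)) *
          opNorm ((((coc f A (-(N : ℤ)) ((f ^ (-((j : ℤ) * N))) p))⁻¹ : GL (Fin d) ℝ) :
            Matrix (Fin d) (Fin d) ℝ)) = a * b := by
      intro j
      have hpoint : (f ^ (-((j : ℤ) * N))) p = p := by
        have : (-((j : ℤ) * N)) = (k : ℤ) * (-((j : ℤ) * n)) := by push_cast [hNdef]; ring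
        rw [this]; exact hfix _
      have hpoint2 : (f ^ (-(N : ℤ))) p = p := by
        have : (-(N : ℤ)) = (k : ℤ) * (-(n : ℤ)) := by push_cast [hNdef]; ring
        rw [this]; exact hfix _
      rw [hpoint, coc_negNatCast f A hN1, hpoint2, ← hMdef, inv_inv]
      ring
    calc (∏ j ∈ Finset.range s,
        opNorm ((coc f A (-(N : ℤ)) ((f ^ (-((j : ℤ) * N))) p) : Matrix (Fin d) (Fin d) ℝ)) *
          opNorm ((((coc f A (-(N : ℤ)) ((f ^ (-((j : ℤ) * N))) p))⁻¹ : GL (Fin d) ℝ) :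
            Matrix (Fin d) (Fin d) ℝ)))
        = (a * b) ^ s := by
          rw [Finset.prod_congr rfl fun j _ => hterm j, Finset.prod_const, Finset.card_range]
      _ ≤ Real.exp ((N : ℝ) * θ) ^ s := pow_le_pow_left₀ (by positivity) hc s
      _ = Real.exp ((s : ℝ) * (N : ℝ) * θ) := hexp
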